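/- Let B be the set of positive integers congruent to 3 mod 4 and A ⊆ B the subset of squarefree such integers. For N ≥ 1 let A_N = ⋃_{n=1}^N (2n−1)²·A. Then the natural density of A_N in B equals (8/π²)·∑_{n=1}^N 1/(2n−1)², and hence tends to 1 as N → ∞. -/

import Mathlib

open Real Filter

noncomputable def cnt (A : Set ℕ) (x : ℕ) : ℕ := (A ∩ Set.Iio x).ncard

/-- `A` has natural density `α` in `B`. -/
def relDensity (A B : Set ℕ) (α : ℝ) : Prop :=
  Filter.Tendsto (fun x => (cnt A x : ℝ) / (cnt B x : ℝ)) Filter.atTop (nhds α)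

namespace S10


def Bs : Set ℕ := {n : ℕ | 0 < n ∧ n % 4 = 3}
def As : Set ℕ := {n ∈ Bs | Squarefree n}

instance : DecidablePred (· ∈ Bs) := fun n => by unfold Bs; infer_instance
instance : DecidablePred (· ∈ As) := fun n => by unfold As Bs; exact instDecidableAnd

lemma cnt_eq_card (S : Set ℕ) [DecidablePred (· ∈ S)] (x : ℕ) :
    cnt S x = ((Finset.range x).filter (· ∈ S)).card := by
  rw [cnt]
  have h : S ∩ Set.Iio x = ↑((Finset.range x).filter (· ∈ S)) := by
    ext n; simp [and_comm]
  rw [h, Set.ncard_coe_finset]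

def g (x : ℕ) : ℕ := ((Finset.range x).filter (· ∈ Bs)).card
def f (x : ℕ) : ℕ := ((Finset.range x).filter (· ∈ As)).card

lemma cnt_Bs (x : ℕ) : cnt Bs x = g x := cnt_eq_card _ x
lemma cnt_As (x : ℕ) : cnt As x = f x := cnt_eq_card _ x

lemma g_eq (x : ℕ) : g x = x / 4 := by
  induction x with
  | zero => simp [g]
  | succ n ih =>
    rw [g, Finset.range_add_one, Finset.filter_insert]
    by_cases h : n ∈ Bs
    · rw [if_pos h, Finset.card_insert_of_notMem (by simp)]
      have h2 : n % 4 = 3 := h.2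
      show (g n) + 1 = (n+1)/4
      rw [ih]; omega
    · rw [if_neg h]
      have h2 : ¬ (0 < n ∧ n % 4 = 3) := h
      show (g n) = (n+1)/4
      rw [ih]; omega

lemma f_le_g (x : ℕ) : f x ≤ g x := by
  apply Finset.card_le_card
  intro n hn
  simp only [Finset.mem_filter] at hn ⊢
  exact ⟨hn.1, hn.2.1⟩

lemma f_mono : Monotone f := fun a b hab =>
  Finset.card_le_card (Finset.filter_subset_filter _ (Finset.range_subset_range.2 hab))

lemma mem_As_ge_three {a : ℕ} (ha : a ∈ As) : 3 ≤ a := by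
  have := ha.1.2; omega

lemma f_eq_zero {y : ℕ} (hy : y ≤ 3) : f y = 0 := by
  rw [f, Finset.card_eq_zero, Finset.filter_eq_empty_iff]
  intro n hn
  simp only [Finset.mem_range] at hn
  intro h
  have := mem_As_ge_three h; omega



def cdiv (x c : ℕ) : ℕ := (x + c - 1) / c

lemma mul_lt_iff {a c x : ℕ} (hc : 0 < c) : c * a < x ↔ a < cdiv x c := by
  rw [cdiv]
  constructor
  · intro h
    have h1 : a + 1 ≤ (x + c - 1) / c := by
      rw [Nat.le_div_iff_mul_le hc]
      have : (a+1)*c = a*c + c := by ring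
      rw [this]
      have : c * a = a * c := by ring
      omega
    omega
  · intro h
    have h1 : a + 1 ≤ (x + c - 1) / c := h
    rw [Nat.le_div_iff_mul_le hc] at h1
    have h2 : (a+1)*c = a*c + c := by ring
    have h3 : c * a = a * c := by ring
    omega

lemma cdiv_one (x : ℕ) : cdiv x 1 = x := by simp [cdiv]

lemma cdiv_bounds {x c : ℕ} (hc : 0 < c) : x ≤ c * cdiv x c ∧ c * cdiv x c ≤ x + c - 1 := by
  rw [cdiv]
  have h1 := Nat.div_add_mod (x + c - 1) c
  have h2 := Nat.mod_lt (x + c - 1) hc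
  omega

lemma cdiv_le {x c : ℕ} (hx : 0 < x) (hc : x ≤ c) : cdiv x c ≤ 1 := by
  rw [cdiv, Nat.div_le_iff_le_mul_add_pred (by omega)]
  omega

lemma cdiv_cast_lower {x c : ℕ} (hc : 0 < c) : (x : ℝ) / c ≤ (cdiv x c : ℝ) := by
  rw [div_le_iff₀ (by positivity)]
  have := (cdiv_bounds (x := x) hc).1
  calc (x:ℝ) ≤ (c * cdiv x c : ℕ) := by exact_mod_cast this
  _ = (cdiv x c : ℝ) * c := by push_cast; ring

lemma cdiv_cast_upper {x c : ℕ} (hc : 0 < c) : (cdiv x c : ℝ) ≤ (x : ℝ) / c + 1 := by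
  have h2 : c * cdiv x c ≤ x + c - 1 := (cdiv_bounds (x := x) hc).2
  have h3 : c * cdiv x c ≤ x + c := by omega
  have h4 : ((c : ℝ)) * (cdiv x c : ℝ) ≤ (x : ℝ) + c := by exact_mod_cast h3
  have hc' : (0:ℝ) < c := by positivity
  rw [← sub_nonneg]
  have : (x:ℝ)/c + 1 - cdiv x c = ((x + c) - c * cdiv x c)/c := by field_simp
  rw [this]
  apply div_nonneg _ hc'.le
  linarith

lemma cdiv_atTop {c : ℕ} (hc : 0 < c) : Filter.Tendsto (fun x => cdiv x c) Filter.atTop Filter.atTop := by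
  apply Filter.tendsto_atTop.2
  intro K
  filter_upwards [Filter.eventually_ge_atTop (c * K)] with x hx
  have := (cdiv_bounds (x := x) hc).1
  by_contra h
  push_neg at h
  have : c * cdiv x c < c * K := by
    exact (Nat.mul_lt_mul_left hc).2 h
  omega

lemma cdiv_pos {x c : ℕ} (hc : 0 < c) (hx : 0 < x) : 0 < cdiv x c := by
  have := (cdiv_bounds (x := x) hc).1
  by_contra h
  push_neg at h
  interval_cases (cdiv x c) <;> omega



lemma mem_Bs_mul {d a : ℕ} (hd : d % 2 = 1) (ha : a ∈ Bs) : d ^ 2 * a ∈ Bs := by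
  obtain ⟨h1, h2⟩ := ha
  obtain ⟨k, hk⟩ : ∃ k, d = 2 * k + 1 := ⟨d / 2, by omega⟩
  subst hk
  constructor
  · positivity
  · have h : (2*k+1)^2 * a = 4 * ((k*k+k)*a) + a := by ring
    omega

lemma exists_decomp {m : ℕ} (hm : m ∈ Bs) : ∃ d a, d % 2 = 1 ∧ a ∈ As ∧ d ^ 2 * a = m := by
  obtain ⟨a, b, ha, hb, hab, hsa⟩ := Nat.sq_mul_squarefree_of_pos hm.1
  refine ⟨b, a, ?_, ⟨⟨ha, ?_⟩, hsa⟩, hab⟩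
  · -- b odd since m odd
    by_contra h
    have hb2 : b % 2 = 0 := by omega
    obtain ⟨k, hk⟩ : ∃ k, b = 2 * k := ⟨b / 2, by omega⟩
    subst hk
    have h4 : m % 4 = 3 := hm.2
    have h5 : (2*k)^2 * a = 4 * (k*k*a) := by ring
    omega
  · -- a % 4 = 3
    have hodd : b % 2 = 1 := by
      by_contra h
      obtain ⟨k, hk⟩ : ∃ k, b = 2 * k := ⟨b / 2, by omega⟩
      subst hk
      have h4 : m % 4 = 3 := hm.2
      have h5 : (2*k)^2 * a = 4 * (k*k*a) := by ring
      omega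
    obtain ⟨k, hk⟩ : ∃ k, b = 2 * k + 1 := ⟨b / 2, by omega⟩
    subst hk
    have h4 : m % 4 = 3 := hm.2
    have h5 : (2*k+1)^2 * a = 4 * ((k*k+k)*a) + a := by ring
    omega

lemma decomp_unique {d₁ a₁ d₂ a₂ : ℕ} (h₁ : Squarefree a₁) (h₂ : Squarefree a₂)
    (hd₁ : 0 < d₁) (hd₂ : 0 < d₂) (h : d₁ ^ 2 * a₁ = d₂ ^ 2 * a₂) : d₁ = d₂ ∧ a₁ = a₂ := by
  have ha₁ : a₁ ≠ 0 := h₁.ne_zero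
  have ha₂ : a₂ ≠ 0 := h₂.ne_zero
  have hfac : ∀ p, 2 * d₁.factorization p + a₁.factorization p
      = 2 * d₂.factorization p + a₂.factorization p := by
    intro p
    have e1 : (d₁ ^ 2 * a₁).factorization = (d₂ ^ 2 * a₂).factorization := by rw [h]
    have e2 := Nat.factorization_mul (pow_ne_zero 2 hd₁.ne') ha₁
    have e3 := Nat.factorization_mul (pow_ne_zero 2 hd₂.ne') ha₂
    have e4 := Nat.factorization_pow d₁ 2
    have e5 := Nat.factorization_pow d₂ 2
    have := congrFun (congrArg (fun f => f.toFun) (e2 ▸ e3 ▸ e1)) p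
    have := congrArg (fun f => f p) e1
    simp only [e2, e3, e4, e5, Finsupp.coe_add, Pi.add_apply, Finsupp.smul_apply,
      smul_eq_mul] at this
    omega
  have hle₁ : ∀ p, a₁.factorization p ≤ 1 := fun p =>
    ((Nat.squarefree_iff_factorization_le_one ha₁).1 h₁) p
  have hle₂ : ∀ p, a₂.factorization p ≤ 1 := fun p =>
    ((Nat.squarefree_iff_factorization_le_one ha₂).1 h₂) p
  constructor
  · exact Nat.eq_of_factorization_eq hd₁.ne' hd₂.ne' (fun p => by
      have := hfac p; have := hle₁ p; have := hle₂ p; omega)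
  · exact Nat.eq_of_factorization_eq ha₁ ha₂ (fun p => by
      have := hfac p; have := hle₁ p; have := hle₂ p; omega)



lemma cnt_union (N x : ℕ) :
    cnt (⋃ n ∈ Finset.Icc 1 N, (fun a => (2 * n - 1) ^ 2 * a) '' As) x
      = ∑ n ∈ Finset.Icc 1 N, f (cdiv x ((2 * n - 1) ^ 2)) := by
  classical
  have hset : (⋃ n ∈ Finset.Icc 1 N, (fun a => (2 * n - 1) ^ 2 * a) '' As) ∩ Set.Iio x
      = ↑((Finset.Icc 1 N).biUnion (fun n =>
          ((Finset.range (cdiv x ((2 * n - 1) ^ 2))).filter (· ∈ As)).image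
            (fun a => (2 * n - 1) ^ 2 * a))) := by
    ext m
    simp only [Set.mem_inter_iff, Set.mem_iUnion, Set.mem_image, Set.mem_Iio,
      Finset.coe_biUnion, Finset.coe_image, Finset.coe_filter, Finset.mem_coe,
      Finset.mem_range, Set.mem_setOf_eq, Finset.mem_Icc]
    constructor
    · rintro ⟨⟨n, hn, a, ha, rfl⟩, hlt⟩
      have h1n : 1 ≤ n := hn.1
      have hc : 0 < (2 * n - 1) ^ 2 := pow_pos (by omega) 2
      exact ⟨n, hn, a, ⟨(mul_lt_iff hc).1 hlt, ha⟩, rfl⟩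
    · rintro ⟨n, hn, a, ⟨hlt, ha⟩, rfl⟩
      have hc : 0 < (2 * n - 1) ^ 2 := pow_pos (by omega : 0 < 2*n-1) 2
      exact ⟨⟨n, hn, a, ha, rfl⟩, (mul_lt_iff hc).2 hlt⟩
  rw [cnt, hset, Set.ncard_coe_finset]
  rw [Finset.card_biUnion]
  · refine Finset.sum_congr rfl (fun n hn => ?_)
    rw [Finset.card_image_of_injective]
    · rfl
    · have h1 : 1 ≤ n := (Finset.mem_Icc.1 hn).1
      have hpos : 0 < (2 * n - 1) ^ 2 := pow_pos (by omega) 2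
      exact fun a b hab => Nat.eq_of_mul_eq_mul_left hpos hab
  · intro n hn n' hn' hne
    rw [Function.onFun, Finset.disjoint_left]
    rintro m hm hm'
    simp only [Finset.mem_image, Finset.mem_filter, Finset.mem_range] at hm hm'
    obtain ⟨a, ⟨-, ha⟩, hma⟩ := hm
    obtain ⟨a', ⟨-, ha'⟩, hma'⟩ := hm'
    have h1 : 1 ≤ n := (Finset.mem_Icc.1 hn).1
    have h1' : 1 ≤ n' := (Finset.mem_Icc.1 hn').1
    have := decomp_unique ha.2 ha'.2 (by omega : 0 < 2*n-1) (by omega : 0 < 2*n'-1)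
      (by rw [hma, hma'])
    exact hne (by omega)

lemma g_eq_sum (x : ℕ) : g x = ∑ n ∈ Finset.Icc 1 x, f (cdiv x ((2 * n - 1) ^ 2)) := by
  rw [← cnt_Bs, ← cnt_union]
  have : Bs ∩ Set.Iio x = (⋃ n ∈ Finset.Icc 1 x, (fun a => (2 * n - 1) ^ 2 * a) '' As)
      ∩ Set.Iio x := by
    ext m
    simp only [Set.mem_inter_iff, Set.mem_iUnion, Set.mem_image, Set.mem_Iio,
      Finset.mem_Icc]
    constructor
    · rintro ⟨hm, hlt⟩
      refine ⟨?_, hlt⟩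
      obtain ⟨d, a, hd, ha, hda⟩ := exists_decomp hm
      have ha3 : 3 ≤ a := mem_As_ge_three ha
      have hd1 : 1 ≤ d := by omega
      have hdsq : d ^ 2 ≤ m := by
        calc d ^ 2 = d ^ 2 * 1 := by ring
        _ ≤ d ^ 2 * a := by exact Nat.mul_le_mul_left _ (by omega)
        _ = m := hda
      have hd2 : d ≤ d ^ 2 := by nlinarith
      refine ⟨(d + 1) / 2, ⟨by omega, by omega⟩, a, ha, ?_⟩
      have : 2 * ((d + 1) / 2) - 1 = d := by omega
      rw [this, hda]
    · rintro ⟨⟨n, hn, a, ha, rfl⟩, hlt⟩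
      refine ⟨mem_Bs_mul ?_ ha.1, hlt⟩
      omega
  rw [cnt, this, ← cnt]



lemma hasSum_odd : HasSum (fun k : ℕ => (1:ℝ)/(2*(k:ℝ)+1)^2) (π^2/8) := by
  have h := hasSum_zeta_two
  have heven : HasSum (fun k : ℕ => (1:ℝ)/(2*(k:ℝ))^2) (1/4*(π^2/6)) := by
    have h2 := h.mul_left (1/4)
    have hfe : (fun k : ℕ => (1:ℝ)/(2*(k:ℝ))^2) = (fun k : ℕ => 1/4*(1/(k:ℝ)^2)) := by
      funext k
      rcases Nat.eq_zero_or_pos k with rfl | hk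
      · simp
      · have : (k:ℝ) ≠ 0 := by positivity
        field_simp
        ring
    rw [hfe]
    exact h2
  have hsumm : Summable (fun k : ℕ => (1:ℝ)/(2*(k:ℝ)+1)^2) := by
    have hi : Function.Injective (fun k : ℕ => 2*k+1) := by
      intro a b hab
      simp only [] at hab
      omega
    have h3 := h.summable.comp_injective hi
    have hfe : (fun k : ℕ => (1:ℝ)/(2*(k:ℝ)+1)^2)
        = ((fun n : ℕ => (1:ℝ)/(n:ℝ)^2) ∘ (fun k : ℕ => 2*k+1)) := by
      funext k
      simp only [Function.comp]
      push_cast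
      ring_nf
    rw [hfe]
    exact h3
  obtain ⟨t, ht⟩ := hsumm
  have hall : HasSum (fun n : ℕ => (1:ℝ)/(n:ℝ)^2) (1/4*(π^2/6) + t) := by
    refine HasSum.even_add_odd ?_ ?_
    · refine heven.congr_fun ?_
      intro k
      push_cast
      ring_nf
    · refine ht.congr_fun ?_
      intro k
      push_cast
      ring_nf
  have := h.unique hall
  have ht8 : t = π^2/8 := by linarith
  rwa [ht8] at ht

lemma sum_Icc_eq (N : ℕ) :
    ∑ n ∈ Finset.Icc 1 N, (1:ℝ)/(2*(n:ℝ)-1)^2 = ∑ k ∈ Finset.range N, (1:ℝ)/(2*(k:ℝ)+1)^2 := by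
  induction N with
  | zero => simp
  | succ n ih =>
    rw [Finset.sum_Icc_succ_top (by omega), Finset.sum_range_succ, ih]
    congr 1
    push_cast
    ring_nf

lemma tendsto_partial : Tendsto (fun N : ℕ => ∑ n ∈ Finset.Icc 1 N, (1:ℝ)/(2*(n:ℝ)-1)^2)
    atTop (nhds (π^2/8)) := by
  have := hasSum_odd.tendsto_sum_nat
  simpa only [sum_Icc_eq] using this

lemma partial_le (M : ℕ) : ∑ n ∈ Finset.Icc 1 M, (1:ℝ)/(2*(n:ℝ)-1)^2 ≤ π^2/8 := by
  rw [sum_Icc_eq]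
  exact sum_le_hasSum _ (fun i _ => by positivity) hasSum_odd

lemma one_le_partial {M : ℕ} (hM : 1 ≤ M) : 1 ≤ ∑ n ∈ Finset.Icc 1 M, (1:ℝ)/(2*(n:ℝ)-1)^2 := by
  have h := Finset.single_le_sum (f := fun n : ℕ => (1:ℝ)/(2*(n:ℝ)-1)^2)
    (fun i _ => by positivity) (Finset.mem_Icc.2 ⟨le_refl 1, hM⟩)
  norm_num at h
  simpa [one_div] using h

lemma S_lt_two : π^2/8 < 2 := by
  have h := Real.pi_lt_d2
  have := Real.pi_pos
  nlinarith

lemma S_pos : 0 < π^2/8 := by positivity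



noncomputable def u (x : ℕ) : ℝ := (f x : ℝ) / x

noncomputable def SM (M : ℕ) : ℝ := ∑ n ∈ Finset.Icc 1 M, (1:ℝ)/(2*(n:ℝ)-1)^2

lemma le_aux {a b : ℝ} (h : ∀ ε : ℝ, 0 < ε → a ≤ b + ε) : a ≤ b := by
  by_contra hc
  push_neg at hc
  have := h ((a-b)/2) (by linarith)
  linarith

lemma cast_d {n : ℕ} (hn : 1 ≤ n) : (((2*n-1)^2 : ℕ) : ℝ) = (2*(n:ℝ)-1)^2 := by
  have : ((2*n-1 : ℕ) : ℝ) = 2*(n:ℝ)-1 := by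
    push_cast [Nat.cast_sub (by omega : 1 ≤ 2*n)]
    ring
  push_cast [this]
  ring

lemma g_cast_upper (x : ℕ) : (g x : ℝ) ≤ (x:ℝ)/4 := by
  rw [g_eq]
  have h2 : (4:ℝ) * ((x/4 : ℕ):ℝ) ≤ (x:ℝ) := by exact_mod_cast Nat.mul_div_le x 4
  linarith

lemma g_cast_lower (x : ℕ) : (x:ℝ)/4 - 1 ≤ (g x : ℝ) := by
  rw [g_eq]
  have h : x ≤ 4 * (x/4) + 3 := by omega
  have h2 : (x:ℝ) ≤ 4 * ((x/4 : ℕ):ℝ) + 3 := by exact_mod_cast h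
  linarith

lemma hu0 (x : ℕ) : 0 ≤ u x := by
  unfold u; positivity

lemma hu1 (x : ℕ) : u x ≤ 1 := by
  unfold u
  rcases Nat.eq_zero_or_pos x with rfl | hx
  · simp
  · rw [div_le_one (by positivity)]
    have h1 := f_le_g x
    have h2 := g_eq x
    have : f x ≤ x := by omega
    exact_mod_cast this

lemma hbdd_above : IsBoundedUnder (· ≤ ·) (atTop : Filter ℕ) u :=
  isBoundedUnder_of ⟨1, fun x => hu1 x⟩

lemma hbdd_below : IsBoundedUnder (· ≥ ·) (atTop : Filter ℕ) u :=
  isBoundedUnder_of ⟨0, fun x => hu0 x⟩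

lemma f_div_eq (x : ℕ) {c : ℕ} (hc : 0 < c) (hx : 0 < x) :
    (f (cdiv x c) : ℝ) / x = u (cdiv x c) * ((cdiv x c : ℝ) / x) := by
  have hy : 0 < cdiv x c := cdiv_pos hc hx
  unfold u
  field_simp

-- lower bound on scaled counts
lemma hlow {c : ℕ} (hc : 0 < c) {ε : ℝ} (hε : 0 < ε) :
    ∀ᶠ x : ℕ in atTop, (liminf u atTop - ε) / c ≤ (f (cdiv x c) : ℝ) / x := by
  have h1 : ∀ᶠ y : ℕ in atTop, liminf u atTop - ε < u y :=
    eventually_lt_of_lt_liminf (by linarith [sub_lt_self (liminf u atTop) hε]) hbdd_below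
  filter_upwards [(cdiv_atTop hc).eventually h1, eventually_ge_atTop 1] with x hx hx1
  have hxpos : (0:ℝ) < x := by exact_mod_cast hx1
  have hcpos : (0:ℝ) < c := by exact_mod_cast hc
  set l := liminf u atTop with hl
  rcases le_or_gt (l - ε) 0 with h | h
  · have : (l - ε)/c ≤ 0 := div_nonpos_of_nonpos_of_nonneg h hcpos.le
    have h2 : (0:ℝ) ≤ (f (cdiv x c) : ℝ) / x := by positivity
    linarith
  · have hy : 0 < cdiv x c := cdiv_pos hc (by omega)
    have hypos : (0:ℝ) < (cdiv x c : ℝ) := by exact_mod_cast hy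
    have h2 : (l - ε) * (cdiv x c : ℝ) ≤ (f (cdiv x c) : ℝ) := by
      have := hx  -- l - ε < u (cdiv x c) = f (cdiv)/cdiv
      rw [u, lt_div_iff₀ hypos] at this
      linarith
    have h3 : (l - ε) * ((x:ℝ)/c) ≤ (l - ε) * (cdiv x c : ℝ) :=
      mul_le_mul_of_nonneg_left (cdiv_cast_lower hc) h.le
    calc (l - ε)/c = (l - ε) * ((x:ℝ)/c) / x := by field_simp
    _ ≤ (l - ε) * (cdiv x c : ℝ) / x := by gcongr
    _ ≤ (f (cdiv x c) : ℝ) / x := by gcongr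

-- upper bound on scaled counts
lemma hup {c : ℕ} (hc : 0 < c) {ε : ℝ} (hε : 0 < ε) :
    ∀ᶠ x : ℕ in atTop, (f (cdiv x c) : ℝ) / x ≤ (limsup u atTop + ε) * (1/c + 1/x) := by
  have hL0 : 0 ≤ limsup u atTop := by
    have h1 : liminf u atTop ≤ limsup u atTop := liminf_le_limsup hbdd_above hbdd_below
    have h2 : 0 ≤ liminf u atTop := le_liminf_of_le hbdd_above.isCoboundedUnder_ge
      (Eventually.of_forall hu0)
    linarith
  have h1 : ∀ᶠ y : ℕ in atTop, u y < limsup u atTop + ε :=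
    eventually_lt_of_limsup_lt (by linarith) hbdd_above
  filter_upwards [(cdiv_atTop hc).eventually h1, eventually_ge_atTop 1] with x hx hx1
  have hxpos : (0:ℝ) < x := by exact_mod_cast hx1
  have hcpos : (0:ℝ) < c := by exact_mod_cast hc
  set L := limsup u atTop with hL
  have hy : 0 < cdiv x c := cdiv_pos hc (by omega)
  have hypos : (0:ℝ) < (cdiv x c : ℝ) := by exact_mod_cast hy
  have h2 : (f (cdiv x c) : ℝ) ≤ (L + ε) * (cdiv x c : ℝ) := by
    have := hx
    rw [u, div_lt_iff₀ hypos] at this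
    linarith
  have h3 : (L + ε) * (cdiv x c : ℝ) ≤ (L + ε) * ((x:ℝ)/c + 1) :=
    mul_le_mul_of_nonneg_left (cdiv_cast_upper hc) (by linarith)
  calc (f (cdiv x c) : ℝ) / x ≤ (L + ε) * ((x:ℝ)/c + 1) / x := by gcongr; linarith
  _ = (L + ε) * (1/c + 1/x) := by field_simp

lemma Icc_split {M : ℕ} (hM : 1 ≤ M) : Finset.Icc 1 M = insert 1 (Finset.Icc 2 M) := by
  ext n
  simp only [Finset.mem_Icc, Finset.mem_insert]
  omega

lemma SM_split {M : ℕ} (hM : 1 ≤ M) :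
    SM M = 1 + ∑ n ∈ Finset.Icc 2 M, (1:ℝ)/(2*(n:ℝ)-1)^2 := by
  rw [SM, Icc_split hM, Finset.sum_insert (by simp)]
  norm_num

lemma d_pos {n : ℕ} (hn : 1 ≤ n) : 0 < (2*n-1)^2 := pow_pos (by omega) 2

lemma hI (M : ℕ) (hM : 1 ≤ M) {ε : ℝ} (hε : 0 < ε) :
    limsup u atTop ≤ 1/4 - (liminf u atTop - ε) * (SM M - 1) := by
  set l := liminf u atTop with hldef
  apply limsup_le_of_le hbdd_below.isCoboundedUnder_le
  have hall : ∀ᶠ x : ℕ in atTop, ∀ n ∈ Finset.Icc 2 M,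
      (l - ε)/(((2*n-1)^2 : ℕ):ℝ) ≤ (f (cdiv x ((2*n-1)^2)) : ℝ)/x := by
    rw [eventually_all_finset]
    intro n hn
    have hn2 : 2 ≤ n := (Finset.mem_Icc.1 hn).1
    exact hlow (d_pos (by omega)) hε
  filter_upwards [hall, eventually_ge_atTop M, eventually_ge_atTop 1] with x hx hxM hx1
  have hxpos : (0:ℝ) < x := by exact_mod_cast hx1
  have hsub : ∑ n ∈ Finset.Icc 1 M, f (cdiv x ((2*n-1)^2)) ≤ g x := by
    rw [g_eq_sum x]
    exact Finset.sum_le_sum_of_subset (Finset.Icc_subset_Icc_right hxM)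
  rw [Icc_split hM, Finset.sum_insert (by simp)] at hsub
  have h1 : cdiv x ((2*1-1)^2) = x := by norm_num [cdiv_one]
  rw [h1] at hsub
  have hcast : (f x : ℝ) + ∑ n ∈ Finset.Icc 2 M, (f (cdiv x ((2*n-1)^2)) : ℝ) ≤ (x:ℝ)/4 := by
    have h2 : ((f x + ∑ n ∈ Finset.Icc 2 M, f (cdiv x ((2*n-1)^2)) : ℕ) : ℝ) ≤ (g x : ℝ) := by
      exact_mod_cast hsub
    push_cast at h2
    linarith [g_cast_upper x]
  have hterm : ∀ n ∈ Finset.Icc 2 M,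
      (l - ε) * ((1:ℝ)/(2*(n:ℝ)-1)^2) ≤ (f (cdiv x ((2*n-1)^2)) : ℝ)/x := by
    intro n hn
    have hn2 : 2 ≤ n := (Finset.mem_Icc.1 hn).1
    have := hx n hn
    rwa [cast_d (by omega), div_eq_mul_one_div] at this
  have hsum : (l - ε) * (SM M - 1) ≤ ∑ n ∈ Finset.Icc 2 M, (f (cdiv x ((2*n-1)^2)) : ℝ)/x := by
    have h5 := Finset.sum_le_sum hterm
    rw [← Finset.mul_sum] at h5
    have hSM : ∑ n ∈ Finset.Icc 2 M, (1:ℝ)/(2*(n:ℝ)-1)^2 = SM M - 1 := by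
      rw [SM_split hM]; ring
    rwa [hSM] at h5
  have hsum_div : ∑ n ∈ Finset.Icc 2 M, (f (cdiv x ((2*n-1)^2)) : ℝ)/x
      = (∑ n ∈ Finset.Icc 2 M, (f (cdiv x ((2*n-1)^2)) : ℝ))/x := by
    rw [Finset.sum_div]
  have hkey : u x + (∑ n ∈ Finset.Icc 2 M, (f (cdiv x ((2*n-1)^2)) : ℝ))/x ≤ 1/4 := by
    rw [u, ← add_div, div_le_iff₀ hxpos]
    calc (f x : ℝ) + ∑ n ∈ Finset.Icc 2 M, (f (cdiv x ((2*n-1)^2)) : ℝ) ≤ (x:ℝ)/4 := hcast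
    _ = 1/4 * x := by ring
  rw [hsum_div] at hsum
  linarith

lemma Icc_eq_Ioc (t : ℕ) : Finset.Icc 1 t = Finset.Ioc 0 t := by
  ext n
  simp only [Finset.mem_Icc, Finset.mem_Ioc]
  omega

lemma SM_diff {M x : ℕ} (hMx : M ≤ x) :
    ∑ n ∈ Finset.Ioc M x, (1:ℝ)/(2*(n:ℝ)-1)^2 = SM x - SM M := by
  have h := Finset.sum_Ioc_consecutive (fun n : ℕ => (1:ℝ)/(2*(n:ℝ)-1)^2)
    (Nat.zero_le M) hMx
  rw [SM, SM, Icc_eq_Ioc, Icc_eq_Ioc]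
  linarith

lemma sqrt_atTop : Tendsto (fun x : ℕ => Nat.sqrt x) atTop atTop := by
  apply tendsto_atTop.2
  intro b
  filter_upwards [eventually_ge_atTop (b^2)] with x hx
  have h := Nat.sqrt_le_sqrt hx
  rwa [Nat.sqrt_eq'] at h

lemma sqrt_div_tendsto : Tendsto (fun x : ℕ => (Nat.sqrt x : ℝ)/x) atTop (nhds 0) := by
  apply squeeze_zero' (Eventually.of_forall (fun x => by positivity))
  · filter_upwards [sqrt_atTop.eventually (eventually_ge_atTop 1),
      Filter.eventually_ge_atTop 1] with x hK hx1
    show (Nat.sqrt x : ℝ)/x ≤ 1/(Nat.sqrt x : ℝ)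
    have hKsq : Nat.sqrt x * Nat.sqrt x ≤ x := by
      have h := Nat.sqrt_le' x; rwa [pow_two] at h
    have hKpos : (0:ℝ) < (Nat.sqrt x : ℝ) := by exact_mod_cast hK
    have h2 : ((Nat.sqrt x * Nat.sqrt x : ℕ):ℝ) ≤ (x:ℝ) := by exact_mod_cast hKsq
    push_cast at h2
    calc (Nat.sqrt x : ℝ)/x ≤ (Nat.sqrt x : ℝ)/((Nat.sqrt x : ℝ)*(Nat.sqrt x : ℝ)) := by
          apply div_le_div_of_nonneg_left hKpos.le (by positivity) h2
    _ = 1/(Nat.sqrt x : ℝ) := by field_simp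
  · exact tendsto_one_div_atTop_nhds_zero_nat.comp sqrt_atTop

lemma Rbound {M x : ℕ} (hM : 1 ≤ M) (hMx : M ≤ x) (hx1 : 1 ≤ x) :
    (∑ n ∈ Finset.Ioc M x, (f (cdiv x ((2*n-1)^2)) : ℝ)) / x
      ≤ (π^2/8 - SM M)/4 + (Nat.sqrt x : ℝ)/(4*x) := by
  classical
  have hxpos : (0:ℝ) < x := by exact_mod_cast hx1
  set K := Nat.sqrt x with hK
  set s := Finset.Ioc M x with hs
  set s' := s.filter (· ≤ K) with hs'
  have hzero : ∀ n ∈ s, n ∉ s' → (f (cdiv x ((2*n-1)^2)) : ℝ) = 0 := by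
    intro n hns hns'
    have hnK : K < n := by
      by_contra h
      exact hns' (Finset.mem_filter.2 ⟨hns, by simpa using not_lt.1 h⟩)
    have hn1 : 1 ≤ n := by
      have := (Finset.mem_Ioc.1 hns).1; omega
    have hxn : x < n * n := by
      have h := Nat.sqrt_lt'.1 hnK; rwa [pow_two] at h
    have hd : x ≤ (2*n-1)^2 := by
      obtain ⟨m, rfl⟩ : ∃ m, n = m + 1 := ⟨n - 1, by omega⟩
      have he : 2*(m+1)-1 = 2*m+1 := by omega
      rw [he]
      have h1 : (m+1) * (m+1) ≤ (2*m+1)^2 := by nlinarith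
      omega
    have hc1 : cdiv x ((2*n-1)^2) ≤ 1 := cdiv_le (by omega) hd
    rw [f_eq_zero (by omega)]
    norm_num
  have hsum_eq : ∑ n ∈ s, (f (cdiv x ((2*n-1)^2)) : ℝ)
      = ∑ n ∈ s', (f (cdiv x ((2*n-1)^2)) : ℝ) :=
    (Finset.sum_subset (Finset.filter_subset _ _) hzero).symm
  have hterm : ∀ n ∈ s', (f (cdiv x ((2*n-1)^2)) : ℝ)
      ≤ (x:ℝ)/(4*(2*(n:ℝ)-1)^2) + 1/4 := by
    intro n hn
    have hns : n ∈ s := Finset.filter_subset _ _ hn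
    have hn1 : 1 ≤ n := by have := (Finset.mem_Ioc.1 hns).1; omega
    have hdpos := d_pos hn1
    have h1 : (f (cdiv x ((2*n-1)^2)) : ℝ) ≤ (g (cdiv x ((2*n-1)^2)) : ℝ) := by
      exact_mod_cast f_le_g _
    have h2 := g_cast_upper (cdiv x ((2*n-1)^2))
    have h3 := cdiv_cast_upper (x := x) hdpos
    rw [cast_d hn1] at h3
    have hdr : (0:ℝ) < (2*(n:ℝ)-1)^2 := by
      have : (1:ℝ) ≤ (n:ℝ) := by exact_mod_cast hn1
      nlinarith
    calc (f (cdiv x ((2*n-1)^2)) : ℝ) ≤ ((cdiv x ((2*n-1)^2) : ℕ):ℝ)/4 := by linarith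
    _ ≤ ((x:ℝ)/(2*(n:ℝ)-1)^2 + 1)/4 := by linarith
    _ = (x:ℝ)/(4*(2*(n:ℝ)-1)^2) + 1/4 := by field_simp
  have hcard : (s'.card : ℝ) ≤ (K : ℝ) := by
    have hsub : s' ⊆ Finset.Icc 1 K := by
      intro n hn
      have hns : n ∈ s := Finset.filter_subset _ _ hn
      have := (Finset.mem_Ioc.1 hns).1
      have := (Finset.mem_filter.1 hn).2
      exact Finset.mem_Icc.2 ⟨by omega, by simpa using this⟩
    have := Finset.card_le_card hsub
    have hcK : (Finset.Icc 1 K).card = K := by rw [Nat.card_Icc]; omega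
    exact_mod_cast hcK ▸ this
  have hsum_le : ∑ n ∈ s', (f (cdiv x ((2*n-1)^2)) : ℝ)
      ≤ (x:ℝ)/4 * (π^2/8 - SM M) + (K:ℝ)/4 := by
    calc ∑ n ∈ s', (f (cdiv x ((2*n-1)^2)) : ℝ)
        ≤ ∑ n ∈ s', ((x:ℝ)/(4*(2*(n:ℝ)-1)^2) + 1/4) := Finset.sum_le_sum hterm
    _ = ∑ n ∈ s', (x:ℝ)/(4*(2*(n:ℝ)-1)^2) + (s'.card : ℝ)/4 := by
        rw [Finset.sum_add_distrib, Finset.sum_const]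
        simp
        ring
    _ ≤ ∑ n ∈ s, (x:ℝ)/(4*(2*(n:ℝ)-1)^2) + (K:ℝ)/4 := by
        have h1 : ∑ n ∈ s', (x:ℝ)/(4*(2*(n:ℝ)-1)^2) ≤ ∑ n ∈ s, (x:ℝ)/(4*(2*(n:ℝ)-1)^2) := by
          apply Finset.sum_le_sum_of_subset_of_nonneg (Finset.filter_subset _ _)
          intro n hns hns'
          have hn1 : 1 ≤ n := by have := (Finset.mem_Ioc.1 hns).1; omega
          have : (1:ℝ) ≤ (n:ℝ) := by exact_mod_cast hn1
          positivity
        linarith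
    _ = (x:ℝ)/4 * (∑ n ∈ s, (1:ℝ)/(2*(n:ℝ)-1)^2) + (K:ℝ)/4 := by
        rw [Finset.mul_sum]
        congr 1
        refine Finset.sum_congr rfl (fun n hn => ?_)
        field_simp
    _ ≤ (x:ℝ)/4 * (π^2/8 - SM M) + (K:ℝ)/4 := by
        have h1 : ∑ n ∈ s, (1:ℝ)/(2*(n:ℝ)-1)^2 = SM x - SM M := SM_diff hMx
        have h2 : SM x ≤ π^2/8 := partial_le x
        have h3 : (0:ℝ) ≤ (x:ℝ)/4 := by positivity
        nlinarith
  rw [hsum_eq]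
  rw [div_le_iff₀ hxpos]
  have hfinal : (x:ℝ)/4 * (π^2/8 - SM M) + (K:ℝ)/4
      = ((π^2/8 - SM M)/4 + (K:ℝ)/(4*x)) * x := by field_simp
  linarith [hsum_le, hfinal ▸ hsum_le]

lemma hII (M : ℕ) (hM : 1 ≤ M) {ε : ℝ} (hε : 0 < ε) :
    1/4 - (limsup u atTop + ε) * (SM M - 1) - (π^2/8 - SM M)/4 - 3*ε ≤ liminf u atTop := by
  set L := limsup u atTop with hLdef
  have hL0 : 0 ≤ L := by
    have h1 : liminf u atTop ≤ L := liminf_le_limsup hbdd_above hbdd_below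
    have h2 : 0 ≤ liminf u atTop := le_liminf_of_le hbdd_above.isCoboundedUnder_ge
      (Eventually.of_forall hu0)
    linarith
  have hL1 : L ≤ 1 := limsup_le_of_le hbdd_below.isCoboundedUnder_le
    (Eventually.of_forall hu1)
  apply le_liminf_of_le hbdd_above.isCoboundedUnder_ge
  have hall : ∀ᶠ x : ℕ in atTop, ∀ n ∈ Finset.Icc 2 M,
      (f (cdiv x ((2*n-1)^2)) : ℝ)/x ≤ (L + ε) * (1/(((2*n-1)^2 : ℕ):ℝ) + 1/(x:ℝ)) := by
    rw [eventually_all_finset]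
    intro n hn
    have hn2 : 2 ≤ n := (Finset.mem_Icc.1 hn).1
    exact hup (d_pos (by omega)) hε
  have hsm : ∀ᶠ x : ℕ in atTop, (Nat.sqrt x : ℝ)/x < ε := by
    have := sqrt_div_tendsto
    exact this.eventually_lt_const hε
  have hone : ∀ᶠ x : ℕ in atTop, (1:ℝ)/x < ε :=
    tendsto_one_div_atTop_nhds_zero_nat.eventually_lt_const hε
  have hMx' : ∀ᶠ x : ℕ in atTop, ((1+ε)*M) * (1/(x:ℝ)) < ε := by
    have h := tendsto_one_div_atTop_nhds_zero_nat.const_mul ((1+ε)*M)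
    rw [mul_zero] at h
    exact h.eventually_lt_const hε
  filter_upwards [hall, hsm, hone, hMx', eventually_ge_atTop M, eventually_ge_atTop 1]
    with x hx hsx honex hMxx hxM hx1
  have hxpos : (0:ℝ) < x := by exact_mod_cast hx1
  -- decomposition of g x
  have hdecomp : g x = f x + ∑ n ∈ Finset.Icc 2 M, f (cdiv x ((2*n-1)^2))
      + ∑ n ∈ Finset.Ioc M x, f (cdiv x ((2*n-1)^2)) := by
    rw [g_eq_sum x, Icc_eq_Ioc]
    rw [← Finset.sum_Ioc_consecutive (fun n => f (cdiv x ((2*n-1)^2))) (Nat.zero_le M) hxM]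
    rw [← Icc_eq_Ioc, Icc_split hM, Finset.sum_insert (by simp)]
    have h1 : cdiv x ((2*1-1)^2) = x := by norm_num [cdiv_one]
    rw [h1]
  have hcast : (f x : ℝ) = (g x : ℝ) - ∑ n ∈ Finset.Icc 2 M, (f (cdiv x ((2*n-1)^2)) : ℝ)
      - ∑ n ∈ Finset.Ioc M x, (f (cdiv x ((2*n-1)^2)) : ℝ) := by
    have h2 : ((f x + ∑ n ∈ Finset.Icc 2 M, f (cdiv x ((2*n-1)^2))
        + ∑ n ∈ Finset.Ioc M x, f (cdiv x ((2*n-1)^2)) : ℕ) : ℝ) = (g x : ℝ) := by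
      exact_mod_cast congrArg (fun t : ℕ => (t:ℝ)) hdecomp.symm
    push_cast at h2
    linarith
  -- bound A
  have hA : 1/4 - 1/(x:ℝ) ≤ (g x : ℝ)/x := by
    have h1 := g_cast_lower x
    rw [← sub_nonneg]
    have h2 : (g x : ℝ)/x - (1/4 - 1/x) = ((g x : ℝ) - (x/4 - 1))/x := by field_simp
    rw [h2]
    apply div_nonneg _ hxpos.le
    linarith
  -- bound B
  have hB : ∑ n ∈ Finset.Icc 2 M, (f (cdiv x ((2*n-1)^2)) : ℝ)/x
      ≤ (L + ε) * (SM M - 1) + ((1+ε)*M) * (1/(x:ℝ)) := by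
    calc ∑ n ∈ Finset.Icc 2 M, (f (cdiv x ((2*n-1)^2)) : ℝ)/x
        ≤ ∑ n ∈ Finset.Icc 2 M, (L + ε) * (1/(((2*n-1)^2 : ℕ):ℝ) + 1/(x:ℝ)) :=
          Finset.sum_le_sum hx
    _ = (L + ε) * (∑ n ∈ Finset.Icc 2 M, 1/(((2*n-1)^2 : ℕ):ℝ))
          + (L + ε) * ((Finset.Icc 2 M).card : ℝ) * (1/(x:ℝ)) := by
        rw [← Finset.mul_sum, Finset.sum_add_distrib, Finset.sum_const, mul_add]
        push_cast
        ring
    _ ≤ (L + ε) * (SM M - 1) + ((1+ε)*M) * (1/(x:ℝ)) := by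
        have h1 : ∑ n ∈ Finset.Icc 2 M, 1/(((2*n-1)^2 : ℕ):ℝ)
            = ∑ n ∈ Finset.Icc 2 M, (1:ℝ)/(2*(n:ℝ)-1)^2 := by
          refine Finset.sum_congr rfl (fun n hn => ?_)
          have hn2 : 2 ≤ n := (Finset.mem_Icc.1 hn).1
          rw [cast_d (by omega)]
        have h2 : ∑ n ∈ Finset.Icc 2 M, (1:ℝ)/(2*(n:ℝ)-1)^2 = SM M - 1 := by
          rw [SM_split hM]; ring
        rw [h1, h2]
        have h3 : ((Finset.Icc 2 M).card : ℝ) ≤ (M : ℝ) := by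
          rw [Nat.card_Icc]
          have : M + 1 - 2 ≤ M := by omega
          exact_mod_cast this
        have h4 : (0:ℝ) < 1/(x:ℝ) := by positivity
        have h5 : (L + ε) * ((Finset.Icc 2 M).card : ℝ) ≤ (1+ε) * M := by
          apply mul_le_mul (by linarith) h3 (by positivity) (by linarith)
        nlinarith
  -- bound C
  have hC := Rbound hM hxM hx1
  -- combine
  have hsum_div1 : ∑ n ∈ Finset.Icc 2 M, (f (cdiv x ((2*n-1)^2)) : ℝ)/x
      = (∑ n ∈ Finset.Icc 2 M, (f (cdiv x ((2*n-1)^2)) : ℝ))/x := by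
    rw [Finset.sum_div]
  have hux : u x = (f x : ℝ)/x := rfl
  rw [hux, hcast]
  have hexp : ((g x : ℝ) - ∑ n ∈ Finset.Icc 2 M, (f (cdiv x ((2*n-1)^2)) : ℝ)
      - ∑ n ∈ Finset.Ioc M x, (f (cdiv x ((2*n-1)^2)) : ℝ))/x
      = (g x : ℝ)/x - (∑ n ∈ Finset.Icc 2 M, (f (cdiv x ((2*n-1)^2)) : ℝ))/x
      - (∑ n ∈ Finset.Ioc M x, (f (cdiv x ((2*n-1)^2)) : ℝ))/x := by
    field_simp
  rw [hexp]
  rw [hsum_div1] at hB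
  have hKx : (Nat.sqrt x : ℝ)/(4*x) ≤ ε := by
    have h1 : (Nat.sqrt x : ℝ)/(4*x) ≤ (Nat.sqrt x : ℝ)/x := by
      apply div_le_div_of_nonneg_left (by positivity) hxpos (by linarith)
    linarith
  linarith

lemma S_ge_one : 1 ≤ π^2/8 := le_trans (one_le_partial (le_refl 1)) (partial_le 1)

lemma hl_bounds : 0 ≤ liminf u atTop ∧ liminf u atTop ≤ limsup u atTop ∧ limsup u atTop ≤ 1 := by
  refine ⟨le_liminf_of_le hbdd_above.isCoboundedUnder_ge (Eventually.of_forall hu0),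
    liminf_le_limsup hbdd_above hbdd_below,
    limsup_le_of_le hbdd_below.isCoboundedUnder_le (Eventually.of_forall hu1)⟩

lemma exists_M {δ : ℝ} (hδ : 0 < δ) : ∃ M, 1 ≤ M ∧ π^2/8 - SM M < δ := by
  have h : ∀ᶠ N in atTop, π^2/8 - δ < SM N := by
    have := tendsto_partial.eventually_const_lt (show π^2/8 - δ < π^2/8 by linarith)
    exact this
  obtain ⟨M, hM1, hM2⟩ := (h.and (eventually_ge_atTop 1)).exists
  exact ⟨M, hM2, by linarith⟩

lemma hI' : limsup u atTop ≤ 1/4 - liminf u atTop * (π^2/8 - 1) := by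
  apply le_aux
  intro ε hε
  set δ := ε/3 with hδdef
  have hδ : 0 < δ := by positivity
  obtain ⟨M, hM1, hMgap⟩ := exists_M hδ
  have h := hI M hM1 hδ
  obtain ⟨hl0, hlL, hL1⟩ := hl_bounds
  have hl1 : liminf u atTop ≤ 1 := le_trans hlL hL1
  have h1M := one_le_partial hM1
  have hMS := partial_le M
  have hS2 := S_lt_two
  rw [show (∑ n ∈ Finset.Icc 1 M, (1:ℝ)/(2*(n:ℝ)-1)^2) = SM M from rfl] at h1M hMS
  nlinarith [h]

lemma hII' : 1/4 - limsup u atTop * (π^2/8 - 1) ≤ liminf u atTop := by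
  apply le_aux
  intro εa hεa
  set ε := εa/6 with hεdef
  have hε : 0 < ε := by positivity
  obtain ⟨M, hM1, hMgap⟩ := exists_M hε
  have h := hII M hM1 hε
  obtain ⟨hl0, hlL, hL1⟩ := hl_bounds
  have hL0 : 0 ≤ limsup u atTop := le_trans hl0 hlL
  have h1M := one_le_partial hM1
  have hMS := partial_le M
  have hS2 := S_lt_two
  rw [show (∑ n ∈ Finset.Icc 1 M, (1:ℝ)/(2*(n:ℝ)-1)^2) = SM M from rfl] at h1M hMS
  nlinarith [h]

lemma main : Tendsto u atTop (nhds (2/π^2)) := by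
  obtain ⟨hl0, hlL, hL1⟩ := hl_bounds
  set l := liminf u atTop with hldef
  set L := limsup u atTop with hLdef
  have h1 := hI'
  have h2 := hII'
  have hS2 := S_lt_two
  have hS1 := S_ge_one
  have hLl : L = l := by
    have h3 : (L - l) * (2 - (π^2/8)) ≤ 0 := by nlinarith
    have h4 : 0 ≤ (L - l) := by linarith
    have h5 : 0 < 2 - (π^2/8) := by linarith
    nlinarith
  have he1 : l ≤ 1/4 - l * (π^2/8 - 1) := by
    have : L ≤ 1/4 - l * (π^2/8 - 1) := h1
    linarith [hLl ▸ this]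
  have he2 : 1/4 - l * (π^2/8 - 1) ≤ l := by
    have h2' : 1/4 - L * (π^2/8 - 1) ≤ l := h2
    rw [hLl] at h2'
    exact h2'
  have heq : l * (π^2/8) = 1/4 := by nlinarith
  have hπ2 : (π:ℝ)^2 ≠ 0 := by positivity
  have hval : l = 2/π^2 := by
    rw [eq_div_iff hπ2]
    nlinarith
  apply tendsto_of_le_liminf_of_limsup_le
  · rw [← hldef, ← hval]
  · rw [← hLdef, hLl, ← hval]
  · exact hbdd_above
  · exact hbdd_below


lemma cdiv_ratio {c : ℕ} (hc : 0 < c) :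
    Tendsto (fun x : ℕ => (cdiv x c : ℝ)/x) atTop (nhds (1/(c:ℝ))) := by
  have hcr : (0:ℝ) < c := by exact_mod_cast hc
  apply tendsto_of_tendsto_of_tendsto_of_le_of_le' (g := fun _ : ℕ => 1/(c:ℝ))
    (h := fun x : ℕ => 1/(c:ℝ) + 1/(x:ℝ))
  · exact tendsto_const_nhds
  · have h := tendsto_one_div_atTop_nhds_zero_nat.const_add (1/(c:ℝ))
    simpa using h
  · filter_upwards [eventually_ge_atTop 1] with x hx1
    have hxpos : (0:ℝ) < x := by exact_mod_cast hx1
    have h1 := cdiv_cast_lower (x := x) hc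
    rw [le_div_iff₀ hxpos]
    calc 1/(c:ℝ) * x = (x:ℝ)/c := by ring
    _ ≤ (cdiv x c : ℝ) := h1
  · filter_upwards [eventually_ge_atTop 1] with x hx1
    have hxpos : (0:ℝ) < x := by exact_mod_cast hx1
    have h1 := cdiv_cast_upper (x := x) hc
    rw [div_le_iff₀ hxpos]
    calc (cdiv x c : ℝ) ≤ (x:ℝ)/c + 1 := h1
    _ = (1/(c:ℝ) + 1/(x:ℝ)) * x := by field_simp

lemma term_tendsto {c : ℕ} (hc : 0 < c) :
    Tendsto (fun x : ℕ => (f (cdiv x c) : ℝ)/x) atTop (nhds ((2/π^2) * (1/(c:ℝ)))) := by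
  have h1 : Tendsto (fun x : ℕ => u (cdiv x c)) atTop (nhds (2/π^2)) :=
    main.comp (cdiv_atTop hc)
  have h2 := h1.mul (cdiv_ratio hc)
  apply h2.congr'
  filter_upwards [eventually_ge_atTop 1] with x hx1
  exact (f_div_eq x hc (by omega)).symm

lemma g_ratio : Tendsto (fun x : ℕ => (g x : ℝ)/x) atTop (nhds (1/4)) := by
  apply tendsto_of_tendsto_of_tendsto_of_le_of_le' (g := fun x : ℕ => 1/4 - 1/(x:ℝ))
    (h := fun _ : ℕ => (1:ℝ)/4)
  · have h := tendsto_one_div_atTop_nhds_zero_nat.const_sub (1/(4:ℝ))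
    simpa using h
  · exact tendsto_const_nhds
  · filter_upwards [eventually_ge_atTop 1] with x hx1
    have hxpos : (0:ℝ) < x := by exact_mod_cast hx1
    have h1 := g_cast_lower x
    rw [← sub_nonneg]
    have h2 : (g x : ℝ)/x - (1/4 - 1/x) = ((g x : ℝ) - (x/4 - 1))/x := by field_simp
    rw [h2]
    apply div_nonneg _ hxpos.le
    linarith
  · filter_upwards [eventually_ge_atTop 1] with x hx1
    have hxpos : (0:ℝ) < x := by exact_mod_cast hx1
    have h1 := g_cast_upper x
    rw [div_le_iff₀ hxpos]
    calc (g x : ℝ) ≤ (x:ℝ)/4 := h1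
    _ = 1/4 * x := by ring

lemma num_tendsto (N : ℕ) :
    Tendsto (fun x : ℕ => (∑ n ∈ Finset.Icc 1 N, (f (cdiv x ((2*n-1)^2)) : ℝ))/x)
      atTop (nhds ((2/π^2) * SM N)) := by
  have h : Tendsto (fun x : ℕ => ∑ n ∈ Finset.Icc 1 N, (f (cdiv x ((2*n-1)^2)) : ℝ)/x)
      atTop (nhds (∑ n ∈ Finset.Icc 1 N, (2/π^2) * ((1:ℝ)/(2*(n:ℝ)-1)^2))) := by
    apply tendsto_finset_sum
    intro n hn
    have hn1 : 1 ≤ n := (Finset.mem_Icc.1 hn).1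
    have := term_tendsto (d_pos hn1)
    rwa [cast_d hn1] at this
  rw [← Finset.mul_sum] at h
  apply h.congr
  intro x
  rw [Finset.sum_div]

lemma final_N (N : ℕ) :
    Tendsto (fun x : ℕ => (∑ n ∈ Finset.Icc 1 N, (f (cdiv x ((2*n-1)^2)) : ℝ))/(g x : ℝ))
      atTop (nhds ((8/π^2) * SM N)) := by
  have h := (num_tendsto N).div g_ratio (by norm_num)
  have hval : (2/π^2) * SM N / (1/4) = (8/π^2) * SM N := by
    have hπ : (π:ℝ)^2 ≠ 0 := by positivity
    field_simp
    ring
  rw [hval] at h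
  apply h.congr'
  filter_upwards [eventually_ge_atTop 4] with x hx4
  have hxpos : (0:ℝ) < x := by
    have : (4:ℝ) ≤ x := by exact_mod_cast hx4
    linarith
  have hgpos : (0:ℝ) < (g x : ℝ) := by
    rw [g_eq]
    have : 1 ≤ x/4 := by omega
    exact_mod_cast this
  simp only [Pi.div_apply]
  field_simp

end S10

theorem stmt_10
    (B : Set ℕ) (hB : B = {n : ℕ | 0 < n ∧ n % 4 = 3})
    (A : Set ℕ) (hA : A = {n ∈ B | Squarefree n})
    (AN : ℕ → Set ℕ)
    (hAN : ∀ N, AN N = ⋃ n ∈ Finset.Icc 1 N, (fun a => (2 * n - 1) ^ 2 * a) '' A) :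
    (∀ N, 1 ≤ N → relDensity (AN N) B
      ((8 / π ^ 2) * ∑ n ∈ Finset.Icc 1 N, 1 / ((2 * (n : ℝ) - 1) ^ 2))) ∧
    Tendsto (fun N : ℕ => (8 / π ^ 2) * ∑ n ∈ Finset.Icc 1 N, 1 / ((2 * (n : ℝ) - 1) ^ 2))
      atTop (nhds 1) := by
  have hBB : B = S10.Bs := hB
  have hAA : A = S10.As := by rw [hA, hBB]; rfl
  constructor
  · intro N hN
    rw [relDensity]
    have hcnt : ∀ x, cnt (AN N) x = ∑ n ∈ Finset.Icc 1 N, S10.f (S10.cdiv x ((2*n-1)^2)) := by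
      intro x
      rw [hAN N, hAA]
      exact S10.cnt_union N x
    have hcntB : ∀ x, cnt B x = S10.g x := by
      intro x
      rw [hBB]
      exact S10.cnt_Bs x
    have h := S10.final_N N
    apply h.congr
    intro x
    rw [hcnt x, hcntB x]
    push_cast
    rfl
  · have h := (S10.tendsto_partial).const_mul ((8:ℝ)/π^2)
    have hval : (8:ℝ)/π^2 * (π^2/8) = 1 := by
      have hπ : (π:ℝ)^2 ≠ 0 := by positivity
      field_simp
    rw [hval] at h
    apply h.congr
    intro N
    ring
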